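/- Let R be a finite type with at least two elements and f : R → ℝ an injective function that is an interval scale. Then the attained values of f are equally spaced: there exists k > 0 such that for all x, y ∈ R with f(x) < f(y) and no z ∈ R with f(x) < f(z) < f(y), one has f(y) − f(x) = k. -/
import Mathlib


/-- An injective interval scale `f` on a finite type with at least two elements
has equally spaced attained values: there is a common gap `k > 0` between
consecutive attained values. -/
theorem equally_spaced_of_interval_scale {R : Type*} [Fintype R]
    (hR : 2 ≤ Fintype.card R) (f : R → ℝ) (hf : Function.Injective f)
    (hscale : ∀ a b c d : R, f a ≤ f b → f c ≤ f d →
      ({r : R | f a ≤ f r ∧ f r ≤ f b}.ncard ≤ {r : R | f c ≤ f r ∧ f r ≤ f d}.ncard ↔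
        f b - f a ≤ f d - f c)) :
    ∃ k : ℝ, 0 < k ∧ ∀ x y : R, f x < f y →
      (¬ ∃ z : R, f x < f z ∧ f z < f y) → f y - f x = k := by
  -- key: any consecutive pair's interval is exactly {x, y}, so ncard = 2
  have key : ∀ x y : R, f x < f y → (¬ ∃ z : R, f x < f z ∧ f z < f y) →
      {r : R | f x ≤ f r ∧ f r ≤ f y}.ncard = 2 := by
    intro x y hxy hno
    have hset : {r : R | f x ≤ f r ∧ f r ≤ f y} = {x, y} := by
      ext r
      simp only [Set.mem_setOf_eq, Set.mem_insert_iff, Set.mem_singleton_iff]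
      constructor
      · rintro ⟨h1, h2⟩
        rcases eq_or_lt_of_le h1 with h1' | h1'
        · exact Or.inl (hf h1'.symm)
        rcases eq_or_lt_of_le h2 with h2' | h2'
        · exact Or.inr (hf h2')
        exact absurd ⟨r, h1', h2'⟩ hno
      · rintro (rfl | rfl)
        · exact ⟨le_refl _, hxy.le⟩
        · exact ⟨hxy.le, le_refl _⟩
    rw [hset, Set.ncard_pair]
    intro h; rw [h] at hxy; exact lt_irrefl _ hxy
  -- find one consecutive pair
  obtain ⟨a, b, hab⟩ := Fintype.exists_pair_of_one_lt_card (α := R) (by omega)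
  have hfab : f a ≠ f b := fun h => hab (hf h)
  obtain ⟨a, b, hab'⟩ : ∃ a b : R, f a < f b := by
    rcases lt_or_gt_of_ne hfab with h | h
    · exact ⟨a, b, h⟩
    · exact ⟨b, a, h⟩
  have hSne : (Finset.univ.filter (fun z => f a < f z)).Nonempty :=
    ⟨b, by simp [hab']⟩
  obtain ⟨y₀, hy₀mem, hy₀min⟩ := Finset.exists_min_image _ f hSne
  have hay₀ : f a < f y₀ := (Finset.mem_filter.mp hy₀mem).2
  have hno₀ : ¬ ∃ z : R, f a < f z ∧ f z < f y₀ := by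
    rintro ⟨z, hz1, hz2⟩
    exact absurd (hy₀min z (by simp [hz1])) (not_le.mpr hz2)
  refine ⟨f y₀ - f a, by linarith, ?_⟩
  intro x y hxy hno
  have h1 := (hscale a y₀ x y hay₀.le hxy.le).mp
  have h2 := (hscale x y a y₀ hxy.le hay₀.le).mp
  rw [key a y₀ hay₀ hno₀, key x y hxy hno] at h1 h2
  have := h1 le_rfl
  have := h2 le_rfl
  linarith
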